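/- Let H : ℝ → [0,∞) be a continuous function with support contained in [−1,1] and with H(x) > 0 for every x with |x| < 1. Let 0 < α < 1/2 and 0 < ε < 1/4 − α². Then there exists a constant C > 0 (depending on H, α, ε) such that for every L ≥ 1 and every real number s with s² ≥ α² + ε, one has ∫_ℝ H(ℓ/L) e^{sℓ} dℓ ≥ C e^{(α+ε)L}. -/

import Mathlib

open MeasureTheory Real Set

noncomputable section

/-- if `H : ℝ → [0,∞)` is continuous, supported in `[−1,1]` and positive on
`(−1,1)`, and `0 < α < 1/2`, `0 < ε < 1/4 − α²`, then there is `C > 0` such that for every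
`L ≥ 1` and every real `s` with `s² ≥ α² + ε`, `∫ H(ℓ/L) e^{sℓ} dℓ ≥ C e^{(α+ε)L}`. -/
theorem exp_growth_of_test_integral (H : ℝ → ℝ) (hcont : Continuous H)
    (hsupp : Function.support H ⊆ Set.Icc (-1 : ℝ) 1)
    (hnonneg : ∀ x : ℝ, 0 ≤ H x)
    (hpos : ∀ x : ℝ, |x| < 1 → 0 < H x)
    (α ε : ℝ) (hα₀ : 0 < α) (hα₁ : α < 1 / 2)
    (hε₀ : 0 < ε) (hε₁ : ε < 1 / 4 - α ^ 2) :
    ∃ C : ℝ, 0 < C ∧ ∀ L : ℝ, 1 ≤ L → ∀ s : ℝ, α ^ 2 + ε ≤ s ^ 2 →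
      C * Real.exp ((α + ε) * L) ≤ ∫ ℓ : ℝ, H (ℓ / L) * Real.exp (s * ℓ) := by
  set β := Real.sqrt (α ^ 2 + ε) with hβdef
  have hsum : 0 < α ^ 2 + ε := by positivity
  have hβpos : 0 < β := Real.sqrt_pos.mpr hsum
  have hβsq : β ^ 2 = α ^ 2 + ε := Real.sq_sqrt hsum.le
  have hαε : 0 < α + ε := by linarith
  have h2a : 2 * α + ε < 1 := by
    nlinarith [mul_pos (sub_pos.mpr hα₁) (show (0:ℝ) < 3/2 - α by linarith)]
  have hlt : α + ε < β := by
    rw [hβdef]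
    rw [show (α+ε) = Real.sqrt ((α+ε)^2) from (Real.sqrt_sq hαε.le).symm]
    apply Real.sqrt_lt_sqrt (by positivity)
    nlinarith [mul_lt_mul_of_pos_left h2a hε₀]
  set t := (α + ε) / β with htdef
  have ht0 : 0 < t := div_pos hαε hβpos
  have ht1 : t < 1 := (div_lt_one hβpos).mpr hlt
  set a := (t + 1) / 2 with hadef
  set b := (t + 3) / 4 with hbdef
  have ha0 : 0 < a := by rw [hadef]; linarith
  have hab : a < b := by rw [hadef, hbdef]; linarith
  have hb1 : b < 1 := by rw [hbdef]; linarith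
  have hβt : β * t = α + ε := mul_div_cancel₀ _ hβpos.ne'
  have hβa : α + ε < β * a := by rw [hadef]; nlinarith
  have hgcont : Continuous (fun x : ℝ => min (H x) (H (-x))) :=
    hcont.min (hcont.comp continuous_neg)
  obtain ⟨x₀, hx₀mem, hx₀min⟩ := isCompact_Icc.exists_isMinOn (α := ℝ)
    (Set.nonempty_Icc.mpr hab.le) hgcont.continuousOn
  set m := min (H x₀) (H (-x₀)) with hmdef
  have hx₀abs : |x₀| < 1 := by
    rw [abs_lt]
    exact ⟨by linarith [hx₀mem.1], by linarith [hx₀mem.2]⟩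
  have hm : 0 < m := lt_min (hpos _ hx₀abs) (hpos _ (by rwa [abs_neg]))
  have hba : 0 < b - a := by linarith
  refine ⟨m * (b - a), mul_pos hm hba, ?_⟩
  intro L hL s hs
  have hL0 : 0 < L := by linarith
  have haL : 0 < a * L := mul_pos ha0 hL0
  have habsβ : β ≤ |s| := by
    rw [hβdef, show |s| = Real.sqrt (s ^ 2) from (Real.sqrt_sq_eq_abs s).symm]
    exact Real.sqrt_le_sqrt hs
  have hfc : Continuous (fun ℓ : ℝ => H (ℓ / L) * Real.exp (s * ℓ)) :=
    (hcont.comp (continuous_id.div_const L)).mul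
      (Real.continuous_exp.comp (continuous_const.mul continuous_id))
  have hInt : Integrable (fun ℓ : ℝ => H (ℓ / L) * Real.exp (s * ℓ)) := by
    apply hfc.integrable_of_hasCompactSupport
    apply HasCompactSupport.intro (isCompact_Icc : IsCompact (Icc (-L) L))
    intro x hx
    have hH : H (x / L) = 0 := by
      by_contra h
      have hx' := hsupp h
      simp only [Set.mem_Icc] at hx' hx
      apply hx
      constructor
      · have := hx'.1
        rw [le_div_iff₀ hL0] at this; linarith
      · have := hx'.2
        rw [div_le_iff₀ hL0] at this; linarith
    simp [hH]
  have hnn : ∀ ℓ : ℝ, 0 ≤ H (ℓ / L) * Real.exp (s * ℓ) :=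
    fun ℓ => mul_nonneg (hnonneg _) (Real.exp_pos _).le
  have key : ∀ c d : ℝ, c ≤ d →
      (∀ ℓ ∈ Icc c d, m * Real.exp (β * a * L) ≤ H (ℓ / L) * Real.exp (s * ℓ)) →
      m * Real.exp (β * a * L) * (d - c) ≤ ∫ ℓ : ℝ, H (ℓ / L) * Real.exp (s * ℓ) := by
    intro c d hcd hbd
    have h1 : ∫ ℓ in Icc c d, H (ℓ / L) * Real.exp (s * ℓ) ≤
        ∫ ℓ : ℝ, H (ℓ / L) * Real.exp (s * ℓ) :=
      setIntegral_le_integral hInt (ae_of_all _ hnn)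
    have h2 : m * Real.exp (β * a * L) * (volume (Icc c d)).toReal ≤
        ∫ ℓ in Icc c d, H (ℓ / L) * Real.exp (s * ℓ) :=
      setIntegral_ge_of_const_le_real measurableSet_Icc
        (by simp [Real.volume_Icc]) hbd hInt.integrableOn
    rw [Real.volume_Icc, ENNReal.toReal_ofReal (by linarith)] at h2
    linarith
  have hmain : m * Real.exp (β * a * L) * ((b - a) * L) ≤
      ∫ ℓ : ℝ, H (ℓ / L) * Real.exp (s * ℓ) := by
    rcases le_or_gt 0 s with hspos | hsneg
    · have hsβ : β ≤ s := by rwa [abs_of_nonneg hspos] at habsβ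
      have hbd : ∀ ℓ ∈ Icc (a * L) (b * L),
          m * Real.exp (β * a * L) ≤ H (ℓ / L) * Real.exp (s * ℓ) := by
        intro ℓ hℓ
        obtain ⟨h1, h2⟩ := hℓ
        have hℓ0 : 0 ≤ ℓ := le_trans haL.le h1
        have hx : ℓ / L ∈ Icc a b :=
          ⟨by rw [le_div_iff₀ hL0]; linarith, by rw [div_le_iff₀ hL0]; linarith⟩
        have hHm : m ≤ H (ℓ / L) :=
          le_trans (isMinOn_iff.mp hx₀min _ hx) (min_le_left _ _)
        have hexp : Real.exp (β * a * L) ≤ Real.exp (s * ℓ) := by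
          apply Real.exp_le_exp.mpr
          calc β * a * L = β * (a * L) := by ring
            _ ≤ s * ℓ := mul_le_mul hsβ h1 haL.le (le_trans hβpos.le hsβ)
        exact mul_le_mul hHm hexp (Real.exp_pos _).le (hnonneg _)
      have hk := key (a * L) (b * L)
        (mul_le_mul_of_nonneg_right hab.le hL0.le) hbd
      rw [show b * L - a * L = (b - a) * L by ring] at hk
      exact hk
    · have hsβ : s ≤ -β := by rw [abs_of_neg hsneg] at habsβ; linarith
      have hbd : ∀ ℓ ∈ Icc (-(b * L)) (-(a * L)),
          m * Real.exp (β * a * L) ≤ H (ℓ / L) * Real.exp (s * ℓ) := by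
        intro ℓ hℓ
        obtain ⟨h1, h2⟩ := hℓ
        have hℓ0 : ℓ ≤ 0 := by linarith
        have hx : -(ℓ / L) ∈ Icc a b := by
          constructor
          · rw [← neg_div, le_div_iff₀ hL0]; linarith
          · rw [← neg_div, div_le_iff₀ hL0]; linarith
        have hHm : m ≤ H (ℓ / L) := by
          have := le_trans (isMinOn_iff.mp hx₀min _ hx) (min_le_right _ _)
          rwa [neg_neg] at this
        have hexp : Real.exp (β * a * L) ≤ Real.exp (s * ℓ) := by
          apply Real.exp_le_exp.mpr
          calc β * a * L = β * (a * L) := by ring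
            _ ≤ -s * -ℓ := mul_le_mul (by linarith) (by linarith) haL.le
                (by linarith)
            _ = s * ℓ := by ring
        exact mul_le_mul hHm hexp (Real.exp_pos _).le (hnonneg _)
      have hk := key (-(b * L)) (-(a * L))
        (neg_le_neg (mul_le_mul_of_nonneg_right hab.le hL0.le)) hbd
      rw [show -(a * L) - -(b * L) = (b - a) * L by ring] at hk
      exact hk
  have he : Real.exp ((α + ε) * L) ≤ Real.exp (β * a * L) :=
    Real.exp_le_exp.mpr (mul_le_mul_of_nonneg_right hβa.le hL0.le)
  have h2 : b - a ≤ (b - a) * L := le_mul_of_one_le_right hba.le hL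
  have h3 : Real.exp ((α + ε) * L) * (b - a) ≤
      Real.exp (β * a * L) * ((b - a) * L) :=
    mul_le_mul he h2 hba.le (Real.exp_pos _).le
  calc m * (b - a) * Real.exp ((α + ε) * L)
      = m * (Real.exp ((α + ε) * L) * (b - a)) := by ring
    _ ≤ m * (Real.exp (β * a * L) * ((b - a) * L)) :=
        mul_le_mul_of_nonneg_left h3 hm.le
    _ = m * Real.exp (β * a * L) * ((b - a) * L) := by ring
    _ ≤ _ := hmain
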